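/- (Staircase Lemma) If P is a valid lattice path from (0,0) to (nr, ns), then P is northwest of the staircase path S = (E^r N^s)^n, i.e., for every vertex (x,y) of P there is a vertex (x',y') of S with x ≤ x' and y ≥ y'. -/

import Mathlib

/-- The vector of a step: `true` is an east step `E=(1,0)`, `false` is a north step `N=(0,1)`. -/
def stepVec (b : Bool) : ℤ × ℤ := if b then (1, 0) else (0, 1)

/-- The point of the lattice path reached after the first `i` steps, starting at `start`. -/
def pathPoint (start : ℤ × ℤ) (steps : List Bool) (i : ℕ) : ℤ × ℤ :=
  start + ((steps.take i).map stepVec).sum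

/-- The path with step list `steps` starting at `start` ends at `fin`. -/
def IsPathFrom (start fin : ℤ × ℤ) (steps : List Bool) : Prop :=
  pathPoint start steps steps.length = fin

/-- Validity of a lattice path with respect to the equivalence `v ~ v + ℓ(r,s)`:
whenever the path enters a point `v` with an `E`-step, every later point of the path
in the class of `v` is also entered with an `E`-step. -/
def Valid (r s : ℤ) (start : ℤ × ℤ) (steps : List Bool) : Prop :=
  ∀ i j, i < j → ∀ (hi : i < steps.length) (hj : j < steps.length),
    (∃ ℓ : ℤ, pathPoint start steps (j + 1) - pathPoint start steps (i + 1) = (ℓ * r, ℓ * s)) →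
    steps.get ⟨i, hi⟩ = true → steps.get ⟨j, hj⟩ = true

/-- The staircase path `S = (E^r N^s)^n`. -/
def staircase (r s n : ℕ) : List Bool :=
  (List.replicate n (List.replicate r true ++ List.replicate s false)).flatten

set_option maxHeartbeats 1000000

namespace SC

def cnt (l : List Bool) (b : Bool) (i : ℕ) : ℕ := ((l.take i).count b)

noncomputable def sig (steps : List Bool) (j : ℕ) : ℕ := sInf {i | j ≤ cnt steps false i}

noncomputable def XX (steps : List Bool) (j : ℕ) : ℕ := cnt steps true (sig steps j)

lemma sum_map_stepVec (l : List Bool) :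
    (l.map stepVec).sum = ((l.count true : ℤ), (l.count false : ℤ)) := by
  induction l with
  | nil => simp; rfl
  | cons a t ih =>
    cases a <;> simp [stepVec, ih, List.count_cons, Prod.ext_iff] <;> ring

lemma pathPoint_eq (l : List Bool) (i : ℕ) :
    pathPoint (0, 0) l i = ((cnt l true i : ℤ), (cnt l false i : ℤ)) := by
  simp only [pathPoint, sum_map_stepVec, cnt]
  simp [Prod.ext_iff]

lemma cnt_zero (l : List Bool) (b : Bool) : cnt l b 0 = 0 := by simp [cnt]

lemma cnt_succ (l : List Bool) (i : ℕ) (hi : i < l.length) :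
    (l.get ⟨i, hi⟩ = true → cnt l true (i+1) = cnt l true i + 1 ∧ cnt l false (i+1) = cnt l false i)
    ∧ (l.get ⟨i, hi⟩ = false → cnt l false (i+1) = cnt l false i + 1 ∧ cnt l true (i+1) = cnt l true i) := by
  have ht : l.take (i+1) = l.take i ++ [l.get ⟨i, hi⟩] := by
    rw [List.take_succ]
    simp [List.getElem?_eq_getElem hi, List.get_eq_getElem]
  constructor <;> intro h <;> rw [h] at ht <;>
    simp [cnt, ht, List.count_append]

lemma cnt_mono (l : List Bool) (b : Bool) {i j : ℕ} (h : i ≤ j) : cnt l b i ≤ cnt l b j := by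
  have hpre : (l.take i).Sublist (l.take j) := by
    have heq : l.take i = (l.take j).take i := by rw [List.take_take, Nat.min_eq_left h]
    rw [heq]; exact List.take_sublist _ _
  exact hpre.count_le b

lemma cnt_stable (l : List Bool) (b : Bool) {i : ℕ} (h : l.length ≤ i) : cnt l b i = l.count b := by
  simp [cnt, List.take_of_length_le h]

lemma cnt_succ_le (l : List Bool) (b : Bool) (i : ℕ) : cnt l b (i+1) ≤ cnt l b i + 1 := by
  by_cases hi : i < l.length
  · rcases Bool.eq_false_or_eq_true (l.get ⟨i, hi⟩) with h | h
    · rcases (cnt_succ l i hi).1 h with ⟨h1, h2⟩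
      cases b <;> omega
    · rcases (cnt_succ l i hi).2 h with ⟨h1, h2⟩
      cases b <;> omega
  · rw [cnt_stable l b (by omega), cnt_stable l b (by omega)]; omega

lemma exists_cross (l : List Bool) (w i₀ i₁ : ℕ) (h0 : cnt l true i₀ < w)
    (h1 : w ≤ cnt l true i₁) :
    ∃ e, i₀ ≤ e ∧ e + 1 ≤ i₁ ∧ ∃ he : e < l.length,
      l.get ⟨e, he⟩ = true ∧ cnt l true (e+1) = w := by
  have hex : ∃ i, w ≤ cnt l true i := ⟨i₁, h1⟩
  classical
  have hFspec : w ≤ cnt l true (Nat.find hex) := Nat.find_spec hex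
  have hFle : Nat.find hex ≤ i₁ := Nat.find_min' hex h1
  have hFgt : i₀ < Nat.find hex := by
    by_contra hc
    have := le_trans hFspec (cnt_mono l true (show Nat.find hex ≤ i₀ by omega))
    omega
  obtain ⟨e, hFe⟩ : ∃ e, Nat.find hex = e + 1 := ⟨Nat.find hex - 1, by omega⟩
  rw [hFe] at hFspec hFle hFgt
  have hnot : ¬ w ≤ cnt l true e := Nat.find_min hex (by omega)
  have hlt : cnt l true e < cnt l true (e+1) := by
    have := cnt_succ_le l true e; omega
  have he : e < l.length := by
    by_contra hc
    rw [cnt_stable l true (by omega), cnt_stable l true (by omega)] at hlt; omega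
  have hget : l.get ⟨e, he⟩ = true := by
    rcases Bool.eq_false_or_eq_true (l.get ⟨e, he⟩) with h | h
    · exact h
    · rcases (cnt_succ l e he).2 h with ⟨_, h2⟩; omega
  refine ⟨e, by omega, by omega, he, hget, ?_⟩
  have := cnt_succ_le l true e
  omega

lemma sig_min {steps : List Bool} {j i : ℕ} (h : j ≤ cnt steps false i) : sig steps j ≤ i :=
  Nat.sInf_le h

lemma sig_not (steps : List Bool) {j e : ℕ} (h : e < sig steps j) :
    ¬ j ≤ cnt steps false e := by
  have := Nat.notMem_of_lt_sInf (s := {i | j ≤ cnt steps false i}) (m := e) h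
  simpa using this

lemma cnt_sig (steps : List Bool) {T : ℕ} (hT : cnt steps false steps.length = T)
    {j : ℕ} (hj : j ≤ T) : cnt steps false (sig steps j) = j := by
  have hne : ∃ i, j ≤ cnt steps false i := ⟨steps.length, by omega⟩
  have hmem : j ≤ cnt steps false (sig steps j) := Nat.sInf_mem hne
  rcases Nat.eq_zero_or_pos (sig steps j) with h0 | hpos
  · rw [h0] at hmem ⊢
    have := cnt_zero steps false; omega
  · obtain ⟨e, he⟩ : ∃ e, sig steps j = e + 1 := ⟨sig steps j - 1, by omega⟩
    have hnot : ¬ j ≤ cnt steps false e := sig_not steps (by omega)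
    have := cnt_succ_le steps false e
    rw [he] at hmem ⊢
    omega

lemma sig_gt (steps : List Bool) {T : ℕ} (hT : cnt steps false steps.length = T)
    {j m : ℕ} (hj : j ≤ T) (h : cnt steps false m < j) : m < sig steps j := by
  by_contra hc
  have := cnt_mono steps false (show sig steps j ≤ m by omega)
  rw [cnt_sig steps hT hj] at this
  omega

lemma sig_mono (steps : List Bool) {T : ℕ} (hT : cnt steps false steps.length = T)
    {j j' : ℕ} (h : j ≤ j') (hj' : j' ≤ T) : sig steps j ≤ sig steps j' :=
  sig_min (by rw [cnt_sig steps hT hj']; exact h)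

lemma sig_le_len (steps : List Bool) {T : ℕ} (hT : cnt steps false steps.length = T)
    {j : ℕ} (hj : j ≤ T) : sig steps j ≤ steps.length :=
  sig_min (by omega)

lemma XX_mono (steps : List Bool) {T : ℕ} (hT : cnt steps false steps.length = T)
    {j j' : ℕ} (h : j ≤ j') (hj' : j' ≤ T) : XX steps j ≤ XX steps j' :=
  cnt_mono steps true (sig_mono steps hT h hj')

lemma sig_N (steps : List Bool) {T : ℕ} (hT : cnt steps false steps.length = T)
    {j : ℕ} (h1 : 1 ≤ j) (hj : j ≤ T) :
    ∃ b, b + 1 = sig steps j ∧ ∃ hb : b < steps.length, steps.get ⟨b, hb⟩ = false := by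
  have hcs := cnt_sig steps hT hj
  have hpos : 0 < sig steps j := by
    rcases Nat.eq_zero_or_pos (sig steps j) with h0 | hp
    · rw [h0] at hcs; rw [cnt_zero] at hcs; omega
    · exact hp
  obtain ⟨b, hb⟩ : ∃ b, sig steps j = b + 1 := ⟨sig steps j - 1, by omega⟩
  have hnot : ¬ j ≤ cnt steps false b := sig_not steps (by omega)
  rw [hb] at hcs
  have hlt : cnt steps false b < cnt steps false (b+1) := by omega
  have hbL : b < steps.length := by
    by_contra hc
    rw [cnt_stable steps false (show steps.length ≤ b by omega),
        cnt_stable steps false (show steps.length ≤ b+1 by omega)] at hlt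
    omega
  have hget : steps.get ⟨b, hbL⟩ = false := by
    rcases Bool.eq_false_or_eq_true (steps.get ⟨b, hbL⟩) with h | h
    · rcases (cnt_succ steps b hbL).1 h with ⟨_, h2⟩; omega
    · exact h
  exact ⟨b, hb.symm, hbL, hget⟩

lemma NC (r s n : ℕ) (steps : List Bool)
    (hvalid : Valid r s (0,0) steps)
    (hT : cnt steps false steps.length = n * s)
    (D j' : ℕ) (hD : 1 ≤ D) (hs : 0 < s) (hj : j' + D * s ≤ n * s)
    (h1 : XX steps j' + D * r < XX steps (j' + D * s))
    (h2 : XX steps (j' + D * s) ≤ XX steps (j' + 1) + D * r) : False := by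
  classical
  unfold Valid at hvalid
  have hDs : 0 < D * s := Nat.mul_pos (by omega) hs
  have hj1 : 1 ≤ j' + D * s := by omega
  obtain ⟨b, hb1, hbL, hbget⟩ := sig_N steps hT hj1 hj
  have hcfb : cnt steps false (b+1) = j' + D * s := by rw [hb1, cnt_sig steps hT hj]
  have hctb : cnt steps true (b+1) = XX steps (j' + D * s) := by rw [hb1]; rfl
  have hwle : D * r ≤ XX steps (j' + D * s) := by omega
  have h0 : cnt steps true (sig steps j') < XX steps (j' + D * s) - D * r := by
    have : XX steps j' < XX steps (j' + D * s) - D * r := by omega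
    exact this
  have h1' : XX steps (j' + D * s) - D * r ≤ cnt steps true (sig steps (j'+1)) := by
    have : XX steps (j' + D * s) - D * r ≤ XX steps (j'+1) := by omega
    exact this
  obtain ⟨e, he0, he1, heL, heget, hew⟩ := exists_cross steps _ _ _ h0 h1'
  have hj'T : j' ≤ n * s := by omega
  have hj'1T : j' + 1 ≤ n * s := by omega
  have hcfe_ge : j' ≤ cnt steps false e := by
    have := cnt_mono steps false he0
    rw [cnt_sig steps hT hj'T] at this
    exact this
  have hcfe_le : cnt steps false e ≤ j' := by
    by_contra hc
    have : sig steps (j'+1) ≤ e := sig_min (by omega)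
    omega
  have hcfe1 : cnt steps false (e+1) = j' := by
    rcases (cnt_succ steps e heL).1 heget with ⟨_, h4⟩
    omega
  have heb : e < b := by
    have hsm : sig steps (j'+1) ≤ sig steps (j' + D * s) :=
      sig_mono steps hT (by omega) hj
    have hne : e ≠ b := by
      intro h
      subst h
      exact Bool.noConfusion (heget.symm.trans hbget)
    omega
  have hclass : pathPoint (0,0) steps (b+1) - pathPoint (0,0) steps (e+1)
      = ((D : ℤ) * (r : ℤ), (D : ℤ) * (s : ℤ)) := by
    rw [pathPoint_eq, pathPoint_eq, hcfb, hctb, hcfe1, hew, Prod.mk_sub_mk, Prod.mk.injEq]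
    constructor
    · rw [Nat.cast_sub hwle]; push_cast; ring
    · push_cast; ring
  have := hvalid e b heb heL hbL ⟨(D : ℤ), hclass⟩ heget
  rw [hbget] at this
  exact Bool.noConfusion this

lemma chain (r s n : ℕ) (steps : List Bool)
    (hvalid : Valid r s (0,0) steps)
    (hT : cnt steps false steps.length = n * s)
    (hs : 0 < s) (k : ℕ) (hk : k + 2 ≤ n)
    (h : XX steps (k*s) + r < XX steps (k*s + s)) :
    XX steps (k*s + s) + r < XX steps (k*s + s + s) := by
  obtain ⟨s', rfl⟩ : ∃ s', s = s' + 1 := ⟨s - 1, by omega⟩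
  have hb2 : k*(s'+1) + (s'+1) + (s'+1) ≤ n * (s'+1) := by
    calc k*(s'+1) + (s'+1) + (s'+1) = (k+2) * (s'+1) := by ring
    _ ≤ n * (s'+1) := Nat.mul_le_mul_right _ hk
  have main : ∀ t, t ≤ s' → XX steps (k*(s'+1) + t + 1) + r < XX steps (k*(s'+1) + (s'+1) + t) := by
    intro t
    induction t with
    | zero =>
      intro _
      by_contra hc
      push_neg at hc
      refine NC r (s'+1) n steps hvalid hT 1 (k*(s'+1)) le_rfl hs ?_ ?_ ?_
      · calc k*(s'+1) + 1*(s'+1) = (k+1)*(s'+1) := by ring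
        _ ≤ n * (s'+1) := Nat.mul_le_mul_right _ (by omega)
      · simpa using h
      · simpa using hc
    | succ t ih =>
      intro ht
      rw [show k*(s'+1) + (t+1) + 1 = k*(s'+1) + t + 1 + 1 from by ring,
          show k*(s'+1) + (s'+1) + (t+1) = k*(s'+1) + (s'+1) + t + 1 from by ring]
      have hprev := ih (by omega)
      have hmono : XX steps (k*(s'+1) + (s'+1) + t) ≤ XX steps (k*(s'+1) + (s'+1) + t + 1) :=
        XX_mono steps hT (by omega) (by omega)
      by_contra hc
      push_neg at hc
      refine NC r (s'+1) n steps hvalid hT 1 (k*(s'+1) + t + 1) le_rfl hs ?_ ?_ ?_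
      · have : k*(s'+1) + t + 1 + 1*(s'+1) = k*(s'+1) + (s'+1) + t + 1 := by ring
        rw [this]; omega
      · have e1 : k*(s'+1) + t + 1 + 1*(s'+1) = k*(s'+1) + (s'+1) + t + 1 := by ring
        rw [e1, one_mul]; omega
      · have e1 : k*(s'+1) + t + 1 + 1*(s'+1) = k*(s'+1) + (s'+1) + t + 1 := by ring
        rw [e1, one_mul]
        omega
  have hfin := main s' le_rfl
  have e3 : k*(s'+1) + s' + 1 = k*(s'+1) + (s'+1) := by ring
  rw [e3] at hfin
  have hmono2 : XX steps (k*(s'+1) + (s'+1) + s') ≤ XX steps (k*(s'+1) + (s'+1) + (s'+1)) :=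
    XX_mono steps hT (by omega) (by omega)
  omega

lemma XXA (r s n : ℕ) (steps : List Bool)
    (hvalid : Valid r s (0,0) steps)
    (hT : cnt steps false steps.length = n * s)
    (hctL : cnt steps true steps.length = n * r)
    (hs : 0 < s) :
    ∀ K ≤ n, XX steps (K*s) ≤ K*r := by
  have hXn : XX steps (n*s) ≤ n*r := by
    have := cnt_mono steps true (sig_le_len steps hT (le_refl (n*s)))
    rw [hctL] at this
    exact this
  by_contra hcon
  push_neg at hcon
  obtain ⟨K, hK, hKgt⟩ := hcon
  have hex : ∃ K, K ≤ n ∧ K*r < XX steps (K*s) := ⟨K, hK, hKgt⟩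
  classical
  have hspec := Nat.find_spec hex
  have hpos : 0 < Nat.find hex := by
    rcases Nat.eq_zero_or_pos (Nat.find hex) with h0 | hp
    · exfalso
      rw [h0] at hspec
      have hX0 : XX steps 0 = 0 := by
        have hsig0 : sig steps 0 = 0 := Nat.le_zero.mp (sig_min (by omega))
        unfold XX
        rw [hsig0, cnt_zero]
      simp [hX0] at hspec
    · exact hp
  obtain ⟨k0, hk0eq⟩ : ∃ k0, Nat.find hex = k0 + 1 := ⟨Nat.find hex - 1, by omega⟩
  rw [hk0eq] at hspec
  have hk0n : k0 + 1 ≤ n := hspec.1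
  have hk0le : XX steps (k0*s) ≤ k0*r := by
    have := Nat.find_min hex (m := k0) (by omega)
    push_neg at this
    exact this (by omega)
  have CC : ∀ m, k0 + m + 1 ≤ n →
      (k0+m+1)*r < XX steps ((k0+m+1)*s) ∧ XX steps ((k0+m)*s) + r < XX steps ((k0+m+1)*s) := by
    intro m
    induction m with
    | zero =>
      intro _
      refine ⟨by simpa using hspec.2, ?_⟩
      have e1 : (k0+1)*r = k0*r + r := by ring
      have e2 : (k0+0+1) = k0+1 := by ring
      have := hspec.2
      simp only [Nat.add_zero]
      omega
    | succ m ih =>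
      intro hmn
      have hm := ih (by omega)
      have hchain := chain r s n steps hvalid hT hs (k0+m) (by omega) (by
        have e1 : (k0+m)*s + s = (k0+m+1)*s := by ring
        rw [e1]
        exact hm.2)
      rw [show (k0+m)*s + s = (k0+m+1)*s from by ring] at hchain
      rw [show (k0+m+1)*s + s = (k0+m+1+1)*s from by ring] at hchain
      have e3 : k0 + (m+1) + 1 = k0 + m + 1 + 1 := by ring
      have e4 : k0 + (m+1) = k0 + m + 1 := by ring
      rw [e3, e4]
      refine ⟨?_, hchain⟩
      have e5 : (k0+m+1+1)*r = (k0+m+1)*r + r := by ring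
      have := hm.1
      omega
  obtain ⟨P1, _⟩ := CC (n - k0 - 1) (by omega)
  have e6 : k0 + (n - k0 - 1) + 1 = n := by omega
  rw [e6] at P1
  omega


lemma stair_succ (r s n : ℕ) :
    staircase r s (n+1) = (List.replicate r true ++ List.replicate s false) ++ staircase r s n := by
  simp [staircase, List.replicate_succ]

lemma stair_count (r s K : ℕ) :
    (staircase r s K).count true = K * r ∧ (staircase r s K).count false = K * s ∧
      (staircase r s K).length = K * (r + s) := by
  induction K with
  | zero => simp [staircase]
  | succ k ih =>
    rw [stair_succ]
    refine ⟨?_, ?_, ?_⟩ <;>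
      simp [List.count_append, List.count_replicate, ih.1, ih.2.1, ih.2.2] <;> ring

lemma stair_add (r s a b : ℕ) :
    staircase r s (a + b) = staircase r s a ++ staircase r s b := by
  induction a with
  | zero => simp [staircase]
  | succ k ih =>
    rw [show k + 1 + b = (k + b) + 1 by ring]
    rw [stair_succ, ih, stair_succ]
    simp [List.append_assoc]

lemma stair_take (r s n K : ℕ) (h : K < n) :
    (staircase r s n).take (K * (r + s) + r) = staircase r s K ++ List.replicate r true := by
  obtain ⟨m, rfl⟩ : ∃ m, n = K + (m + 1) := ⟨n - K - 1, by omega⟩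
  rw [stair_add, stair_succ]
  rw [show K * (r+s) + r = (staircase r s K).length + r by rw [(stair_count r s K).2.2]]
  rw [List.take_append, List.take_of_length_le (Nat.le_add_right _ _), Nat.add_sub_cancel_left]
  congr 1
  rw [List.append_assoc, List.take_append_of_le_length (by simp), List.take_replicate]
  simp

end SC

/-- Staircase Lemma: a valid path from `(0,0)` to `(nr,ns)` is northwest of
the staircase: every vertex of `P` has some vertex of `S` weakly southeast of it. -/
theorem staircase_lemma (r s n : ℕ) (hr : 0 < r) (hs : 0 < s) (hn : 0 < n)
    (steps : List Bool)
    (hpath : IsPathFrom (0, 0) ((n * r : ℤ), (n * s : ℤ)) steps)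
    (hvalid : Valid r s (0, 0) steps) :
    ∀ m ≤ steps.length, ∃ m' ≤ (staircase r s n).length,
      (pathPoint (0, 0) steps m).1 ≤ (pathPoint (0, 0) (staircase r s n) m').1 ∧
      (pathPoint (0, 0) (staircase r s n) m').2 ≤ (pathPoint (0, 0) steps m).2 := by
  classical
  have hpath' : pathPoint (0,0) steps steps.length = ((n*r : ℤ), (n*s : ℤ)) := hpath
  rw [SC.pathPoint_eq] at hpath'
  have hctL : SC.cnt steps true steps.length = n * r := by
    have h1 := congrArg Prod.fst hpath'
    simp only [Prod.fst] at h1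
    exact_mod_cast h1
  have hcfL : SC.cnt steps false steps.length = n * s := by
    have h1 := congrArg Prod.snd hpath'
    simp only [Prod.snd] at h1
    exact_mod_cast h1
  have hA := SC.XXA r s n steps hvalid hcfL hctL hs
  intro m hm
  have hyle : SC.cnt steps false m ≤ n * s := by
    have := SC.cnt_mono steps false hm
    omega
  by_cases hcase : SC.cnt steps false m = n * s
  · refine ⟨(staircase r s n).length, le_rfl, ?_, ?_⟩
    · rw [SC.pathPoint_eq, SC.pathPoint_eq]
      dsimp only
      have hsc : SC.cnt (staircase r s n) true (staircase r s n).length = n*r := by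
        rw [SC.cnt_stable _ _ le_rfl, (SC.stair_count r s n).1]
      rw [hsc]
      have h2 := SC.cnt_mono steps true hm
      exact_mod_cast le_trans h2 (le_of_eq hctL)
    · rw [SC.pathPoint_eq, SC.pathPoint_eq]
      dsimp only
      have hsc : SC.cnt (staircase r s n) false (staircase r s n).length = n*s := by
        rw [SC.cnt_stable _ _ le_rfl, (SC.stair_count r s n).2.1]
      rw [hsc, hcase]
  · have hylt : SC.cnt steps false m < n * s := by omega
    have hdm := Nat.div_add_mod (SC.cnt steps false m) s
    have hmod := Nat.mod_lt (SC.cnt steps false m) hs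
    set K := SC.cnt steps false m / s with hKdef
    have hKn : K + 1 ≤ n := by
      have := (Nat.div_lt_iff_lt_mul hs).mpr hylt
      omega
    have hysucc : SC.cnt steps false m + 1 ≤ (K+1)*s := by
      have e : (K+1)*s = s*K + s := by ring
      omega
    have hxb : SC.cnt steps true m ≤ (K+1) * r := by
      have h1 : m < SC.sig steps (SC.cnt steps false m + 1) :=
        SC.sig_gt steps hcfL (by omega) (by omega)
      have h2 : SC.cnt steps true m ≤ SC.XX steps (SC.cnt steps false m + 1) :=
        SC.cnt_mono steps true (by omega)
      have h3 : SC.XX steps (SC.cnt steps false m + 1) ≤ SC.XX steps ((K+1)*s) :=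
        SC.XX_mono steps hcfL hysucc (Nat.mul_le_mul_right _ hKn)
      have h4 := hA (K+1) hKn
      omega
    have hlen : K*(r+s) + r ≤ (staircase r s n).length := by
      rw [(SC.stair_count r s n).2.2]
      have h5 : (K+1)*(r+s) ≤ n*(r+s) := Nat.mul_le_mul_right _ hKn
      have e : (K+1)*(r+s) = K*(r+s) + r + s := by ring
      omega
    have htk := SC.stair_take r s n K (by omega)
    have hsct : SC.cnt (staircase r s n) true (K*(r+s)+r) = K*r + r := by
      unfold SC.cnt
      rw [htk, List.count_append, (SC.stair_count r s K).1, List.count_replicate]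
      simp
    have hscf : SC.cnt (staircase r s n) false (K*(r+s)+r) = K*s := by
      unfold SC.cnt
      rw [htk, List.count_append, (SC.stair_count r s K).2.1, List.count_replicate]
      simp
    refine ⟨K*(r+s) + r, hlen, ?_, ?_⟩
    · rw [SC.pathPoint_eq, SC.pathPoint_eq]
      dsimp only
      rw [hsct]
      have : SC.cnt steps true m ≤ K*r + r := by
        have e : (K+1)*r = K*r + r := by ring
        omega
      exact_mod_cast this
    · rw [SC.pathPoint_eq, SC.pathPoint_eq]
      dsimp only
      rw [hscf]
      have : K*s ≤ SC.cnt steps false m := by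
        have e : K*s = s*K := by ring
        omega
      exact_mod_cast this
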